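/- The integral ∫_{(ℂ∖{0})²} 1 / ( max{1, |y₁|², |y₂|², |y₁y₂|^{−2}} · |y₁y₂|² ) dλ(y₁) dλ(y₂) equals 9π², where λ is Lebesgue measure on ℂ ≅ ℝ². (Consequently, with each measure normalized as twice Lebesgue measure, the value is 36π².) -/

import Mathlib

open MeasureTheory Set ENNReal Filter
open scoped Topology


lemma radial_lintegral (f : ℝ → ℝ≥0∞) (hf : Measurable f) :
    ∫⁻ z : ℂ, f ‖z‖ =
      ENNReal.ofReal (2 * Real.pi) * ∫⁻ r in Ioi (0:ℝ), ENNReal.ofReal r * f r := by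
  have h0 : ∫⁻ z : ℂ, f ‖z‖
      = ∫⁻ x : ({0}ᶜ : Set ℂ), f ‖x.1‖ ∂((volume : Measure ℂ).comap Subtype.val) := by
    rw [lintegral_subtype_comap (measurableSet_singleton (0:ℂ)).compl (fun z => f ‖z‖),
      restrict_compl_singleton]
  rw [h0]
  have hmp := (volume : Measure ℂ).measurePreserving_homeomorphUnitSphereProd
  have h1 : ∫⁻ x : ({0}ᶜ : Set ℂ), f ‖x.1‖ ∂((volume : Measure ℂ).comap Subtype.val) =
      ∫⁻ p : Metric.sphere (0:ℂ) 1 × Ioi (0:ℝ), f p.2.1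
        ∂((volume : Measure ℂ).toSphere.prod (.volumeIoiPow (Module.finrank ℝ ℂ - 1))) := by
    rw [← hmp.lintegral_comp (f := fun p : Metric.sphere (0:ℂ) 1 × Ioi (0:ℝ) => f p.2.1)
      (hf.comp (measurable_subtype_coe.comp measurable_snd))]
    simp
  rw [h1]
  have hprod : ∫⁻ p : Metric.sphere (0:ℂ) 1 × Ioi (0:ℝ), f p.2.1
        ∂((volume : Measure ℂ).toSphere.prod (.volumeIoiPow (Module.finrank ℝ ℂ - 1))) =
      (∫⁻ y : Ioi (0:ℝ), f y.1 ∂(Measure.volumeIoiPow (Module.finrank ℝ ℂ - 1)))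
        * (volume : Measure ℂ).toSphere univ := by
    refine (lintegral_prod _ ((hf.comp
      (measurable_subtype_coe.comp measurable_snd)).aemeasurable)).trans ?_
    simp only [Function.comp_apply]
    exact lintegral_const _
  rw [hprod]
  have h2 : ∫⁻ y : Ioi (0:ℝ), f y.1 ∂(Measure.volumeIoiPow (Module.finrank ℝ ℂ - 1)) =
      ∫⁻ r in Ioi (0:ℝ), ENNReal.ofReal r * f r := by
    refine (lintegral_withDensity_eq_lintegral_mul _
      ((measurable_subtype_coe.pow_const _).ennreal_ofReal)
      (hf.comp measurable_subtype_coe)).trans ?_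
    refine ((lintegral_subtype_comap measurableSet_Ioi
      (fun r => ENNReal.ofReal (r ^ (Module.finrank ℝ ℂ - 1)) * f r)).trans ?_)
    simp [Complex.finrank_real_complex]
  have h3 : (volume : Measure ℂ).toSphere univ = ENNReal.ofReal (2 * Real.pi) := by
    rw [Measure.toSphere_apply_univ]
    simp only [Complex.volume_ball, Complex.finrank_real_complex, ENNReal.ofReal_one, one_pow,
      one_mul, ENNReal.ofReal_mul (by norm_num : (0:ℝ) ≤ 2), ← NNReal.coe_real_pi,
      ENNReal.ofReal_coe_nnreal]
    norm_num
  rw [h2, h3, mul_comm]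


-- helpers for inverse inequalities
lemma le_inv_of_mul_le' {a b : ℝ} (hb : 0 < b) (h : a * b ≤ 1) : a ≤ b⁻¹ := by
  rw [← one_div, le_div_iff₀ hb]; exact h

lemma inv_le_of_one_le_mul' {a b : ℝ} (hb : 0 < b) (h : 1 ≤ a * b) : b⁻¹ ≤ a := by
  rw [← one_div, div_le_iff₀ hb]; exact h

noncomputable def Fi (r s : ℝ) : ℝ :=
  (max (max 1 (r ^ 2)) (max (s ^ 2) (((r * s) ^ 2)⁻¹)) * (r * s) ^ 2)⁻¹

lemma Fi_meas : Measurable (Function.uncurry Fi) := by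
  unfold Fi Function.uncurry
  fun_prop

-- Region identifications
lemma Fi_low {r s : ℝ} (hr : 0 < r) (hs : 0 < s) (h1 : (r*s)^2 ≤ 1)
    (h2 : r^2 * (r*s)^2 ≤ 1) (h3 : s^2 * (r*s)^2 ≤ 1) : Fi r s = 1 := by
  have hrs : (0:ℝ) < (r*s)^2 := by positivity
  have e1 : max (s^2) (((r*s)^2)⁻¹) = ((r*s)^2)⁻¹ :=
    max_eq_right (le_inv_of_mul_le' hrs h3)
  have e2 : max (max 1 (r^2)) (((r*s)^2)⁻¹) = ((r*s)^2)⁻¹ := by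
    refine max_eq_right (max_le (le_inv_of_mul_le' hrs (by linarith)) ?_)
    exact le_inv_of_mul_le' hrs h2
  rw [Fi, e1, e2, inv_mul_cancel₀ (ne_of_gt hrs), inv_one]

lemma Fi_mid {r s : ℝ} (hr : 1 ≤ r) (hs : 0 < s) (hsr : s ≤ r) (h : 1 ≤ r^2 * (r*s)^2) :
    Fi r s = (r^4)⁻¹ * (s^2)⁻¹ := by
  have hrs : (0:ℝ) < (r*s)^2 := by positivity
  have e1 : max (s^2) (((r*s)^2)⁻¹) ≤ r^2 :=
    max_le (by nlinarith) (inv_le_of_one_le_mul' hrs h)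
  have e2 : max 1 (r^2) = r^2 := max_eq_right (by nlinarith)
  rw [Fi, e2, max_eq_left e1, ← mul_inv]
  congr 1
  ring

lemma Fi_high {r s : ℝ} (hr : 0 < r) (hs1 : 1 ≤ s) (hrs : r ≤ s) (h : 1 ≤ s^2 * (r*s)^2) :
    Fi r s = (r^2)⁻¹ * (s^4)⁻¹ := by
  have hrs2 : (0:ℝ) < (r*s)^2 := by positivity
  have e1 : max (s^2) (((r*s)^2)⁻¹) = s^2 := max_eq_left (inv_le_of_one_le_mul' hrs2 h)
  have e2 : max (max 1 (r^2)) (s^2) = s^2 :=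
    max_eq_right (max_le (by nlinarith) (by nlinarith))
  rw [Fi, e1, e2, ← mul_inv]
  congr 1
  ring

-- Elementary real integrals
lemma E1 {a : ℝ} (ha : 0 ≤ a) : ∫ s in Ioc (0:ℝ) a, s = a^2/2 := by
  rw [← intervalIntegral.integral_of_le ha, integral_id]
  ring

lemma E2 {a b c : ℝ} (ha : 0 < a) (hab : a ≤ b) :
    ∫ s in Ioc a b, c * s⁻¹ = c * (Real.log b - Real.log a) := by
  rw [← intervalIntegral.integral_of_le hab, intervalIntegral.integral_const_mul,
    integral_inv (Set.notMem_uIcc_of_lt ha (lt_of_lt_of_le ha hab)),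
    Real.log_div (by linarith) (by linarith)]

lemma E3deriv {x : ℝ} (hx : 0 < x) :
    HasDerivAt (fun s : ℝ => -(2 * s^2)⁻¹) ((x^3)⁻¹) x := by
  have h : HasDerivAt (fun s : ℝ => s^2) (2*x) x := by
    simpa using (hasDerivAt_pow 2 x)
  have h2 : HasDerivAt (fun s : ℝ => 2 * s^2) (2*(2*x)) x := h.const_mul 2
  have h3 := (h2.inv (by positivity)).neg
  refine h3.congr_deriv ?_
  have hx0 : x ≠ 0 := hx.ne'
  field_simp

lemma E3 {c d : ℝ} (hc : 0 < c) (hd : 0 ≤ d) :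
    ∫ s in Ioi c, d * (s^3)⁻¹ = d * (2*c^2)⁻¹ := by
  have := integral_Ioi_of_hasDerivAt_of_nonneg' (g := fun s : ℝ => d * -(2 * s^2)⁻¹)
    (g' := fun s => d * (s^3)⁻¹) (a := c) (l := 0)
    (fun x hx => ((E3deriv (lt_of_lt_of_le hc hx)).const_mul d))
    (fun x hx => mul_nonneg hd (inv_nonneg.2 (pow_nonneg (le_of_lt (hc.trans hx)) 3)))
    ?_
  · rw [this]; field_simp; ring
  · have : Tendsto (fun s : ℝ => (2 * s^2)⁻¹) atTop (𝓝 0) := by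
      apply Tendsto.inv_tendsto_atTop
      exact (tendsto_pow_atTop (by norm_num)).const_mul_atTop (by norm_num)
    have h0 : Tendsto (fun s : ℝ => d * -(2 * s^2)⁻¹) atTop (𝓝 (d * -0)) := (this.neg).const_mul d
    simpa using h0

lemma E3int {c d : ℝ} (hc : 0 < c) (hd : 0 ≤ d) :
    IntegrableOn (fun s : ℝ => d * (s^3)⁻¹) (Ioi c) := by
  have ht : Tendsto (fun s : ℝ => (2 * s^2)⁻¹) atTop (𝓝 0) := by
    apply Tendsto.inv_tendsto_atTop
    exact (tendsto_pow_atTop (by norm_num)).const_mul_atTop (by norm_num)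
  have h0 : Tendsto (fun s : ℝ => d * -(2 * s^2)⁻¹) atTop (𝓝 (d * -0)) := (ht.neg).const_mul d
  exact integrableOn_Ioi_deriv_of_nonneg' (g := fun s : ℝ => d * -(2 * s^2)⁻¹)
    (fun x hx => ((E3deriv (lt_of_lt_of_le hc hx)).const_mul d))
    (fun x hx => mul_nonneg hd (inv_nonneg.2 (pow_nonneg (le_of_lt (hc.trans hx)) 3)))
    (by simpa using h0)

lemma E5deriv {x : ℝ} (hx : 0 < x) :
    HasDerivAt (fun r : ℝ => -(2*r^2)⁻¹ - (3/2) * (Real.log r * (r^2)⁻¹) - (3/4) * (r^2)⁻¹)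
      ((1 + 3*Real.log x) * (x^3)⁻¹) x := by
  have hx2 : x^2 ≠ 0 := by positivity
  have h1 : HasDerivAt (fun s : ℝ => s^2) (2*x) x := by simpa using (hasDerivAt_pow 2 x)
  have hinv : HasDerivAt (fun s : ℝ => (s^2)⁻¹) (-(2*x) / (x^2)^2) x := h1.inv hx2
  have hlog : HasDerivAt Real.log x⁻¹ x := Real.hasDerivAt_log (ne_of_gt hx)
  have hmul : HasDerivAt (fun s : ℝ => Real.log s * (s^2)⁻¹)
      (x⁻¹ * (x^2)⁻¹ + Real.log x * (-(2*x) / (x^2)^2)) x := hlog.mul hinv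
  have h2 : HasDerivAt (fun s : ℝ => 2 * s^2) (2*(2*x)) x := h1.const_mul 2
  have hA := (h2.inv (by positivity)).neg
  have := (hA.sub (hmul.const_mul (3/2))).sub (hinv.const_mul (3/4))
  refine this.congr_deriv ?_
  have hx0 : x ≠ 0 := hx.ne'
  field_simp
  ring

lemma E5aux : Tendsto (fun r : ℝ =>
    -(2*r^2)⁻¹ - (3/2) * (Real.log r * (r^2)⁻¹) - (3/4) * (r^2)⁻¹) atTop (𝓝 0) := by
  have h2 : Tendsto (fun s : ℝ => (s^2)⁻¹) atTop (𝓝 0) :=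
    Tendsto.inv_tendsto_atTop (tendsto_pow_atTop (by norm_num))
  have h1 : Tendsto (fun s : ℝ => (2 * s^2)⁻¹) atTop (𝓝 0) :=
    Tendsto.inv_tendsto_atTop ((tendsto_pow_atTop (by norm_num)).const_mul_atTop (by norm_num))
  have hlog : Tendsto (fun s : ℝ => Real.log s * (s^2)⁻¹) atTop (𝓝 0) := by
    have := (isLittleO_log_rpow_atTop (by norm_num : (0:ℝ) < 2)).tendsto_div_nhds_zero
    refine this.congr' ?_
    filter_upwards [eventually_gt_atTop (0:ℝ)] with x hx
    rw [div_eq_mul_inv, show ((2:ℝ)) = ((2:ℕ):ℝ) by norm_num, Real.rpow_natCast]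
  have := ((h1.neg.sub (hlog.const_mul (3/2))).sub (h2.const_mul (3/4)))
  simpa using this

lemma E5 : ∫ r in Ioi (1:ℝ), (1 + 3*Real.log r) * (r^3)⁻¹ = 5/4 := by
  have key := integral_Ioi_of_hasDerivAt_of_nonneg'
    (g := fun r : ℝ => -(2*r^2)⁻¹ - (3/2) * (Real.log r * (r^2)⁻¹) - (3/4) * (r^2)⁻¹)
    (g' := fun r : ℝ => (1 + 3*Real.log r) * (r^3)⁻¹) (a := 1) (l := 0)
    (fun x hx => E5deriv (lt_of_lt_of_le one_pos hx))
    (fun x hx => mul_nonneg (by nlinarith [Real.log_nonneg (le_of_lt hx)])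
      (inv_nonneg.2 (pow_nonneg (by linarith [mem_Ioi.1 hx]) 3)))
    E5aux
  rw [key]
  simp [Real.log_one]
  norm_num

lemma E5int : IntegrableOn (fun r : ℝ => (1 + 3*Real.log r) * (r^3)⁻¹) (Ioi 1) :=
  integrableOn_Ioi_deriv_of_nonneg'
    (fun x hx => E5deriv (lt_of_lt_of_le one_pos hx))
    (fun x hx => mul_nonneg (by nlinarith [Real.log_nonneg (le_of_lt hx)])
      (inv_nonneg.2 (pow_nonneg (by linarith [mem_Ioi.1 hx]) 3)))
    E5aux

lemma lint_eq {A : Set ℝ} {g : ℝ → ℝ} (hA : MeasurableSet A) (hint : IntegrableOn g A)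
    (h0 : ∀ x ∈ A, 0 ≤ g x) :
    ∫⁻ s in A, ENNReal.ofReal (g s) = ENNReal.ofReal (∫ s in A, g s) :=
  (ofReal_integral_eq_lintegral_ofReal hint ((ae_restrict_iff' hA).2 (ae_of_all _ h0))).symm

noncomputable def G (r : ℝ) : ℝ≥0∞ := ∫⁻ s in Ioi (0:ℝ), ENNReal.ofReal (s * Fi r s)

lemma split1 {a : ℝ} (ha : 0 < a) (f : ℝ → ℝ≥0∞) :
    ∫⁻ s in Ioi (0:ℝ), f s = (∫⁻ s in Ioc (0:ℝ) a, f s) + ∫⁻ s in Ioi a, f s := by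
  rw [← Ioc_union_Ioi_eq_Ioi ha.le, lintegral_union measurableSet_Ioi (Ioc_disjoint_Ioi le_rfl)]

lemma Gle {r : ℝ} (hr : 0 < r) (hr1 : r ≤ 1) : G r = ENNReal.ofReal r⁻¹ := by
  set a : ℝ := (Real.sqrt r)⁻¹ with hadef
  have hsq : 0 < Real.sqrt r := Real.sqrt_pos.2 hr
  have hsq1 : Real.sqrt r ≤ 1 := by
    rw [show (1:ℝ) = Real.sqrt 1 by simp]
    exact Real.sqrt_le_sqrt hr1
  have ha : 0 < a := inv_pos.2 hsq
  have ha1 : 1 ≤ a := one_le_inv_iff₀.2 ⟨hsq, hsq1⟩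
  have ha2 : a^2 = r⁻¹ := by
    rw [hadef, inv_pow, Real.sq_sqrt hr.le]
  have hrr : r * r⁻¹ = 1 := mul_inv_cancel₀ (ne_of_gt hr)
  rw [G, split1 ha]
  have p1 : ∫⁻ s in Ioc (0:ℝ) a, ENNReal.ofReal (s * Fi r s)
      = ENNReal.ofReal (r⁻¹/2) := by
    have key1 : ∀ s ∈ Ioc (0:ℝ) a, ENNReal.ofReal (s * Fi r s) = ENNReal.ofReal s := by
      intro s hs
      have hs0 : 0 < s := hs.1
      have hs2 : s^2 ≤ r⁻¹ := by nlinarith [hs.2, ha2]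
      have h1 : r^2 * s^2 ≤ r := by
        have := mul_le_mul_of_nonneg_left hs2 (sq_nonneg r)
        calc r^2 * s^2 ≤ r^2 * r⁻¹ := this
        _ = r * (r * r⁻¹) := by ring
        _ = r := by rw [hrr]; ring
      have h2 : r^3 ≤ 1 := by nlinarith
      have h3 : r^2*(r^2*s^2) ≤ r^2*r := mul_le_mul_of_nonneg_left h1 (sq_nonneg r)
      have h4 : (r^2*s^2)*s^2 ≤ r * r⁻¹ := mul_le_mul h1 hs2 (sq_nonneg s) hr.le
      rw [Fi_low hr hs0 (by nlinarith [h1]) (by nlinarith [h2, h3]) (by nlinarith [h4, hrr]),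
        mul_one]
    have conv1 : ∫⁻ s in Ioc (0:ℝ) a, ENNReal.ofReal s
        = ENNReal.ofReal (∫ s in Ioc (0:ℝ) a, s) :=
      lint_eq measurableSet_Ioc (by apply Continuous.integrableOn_Ioc; fun_prop)
        (fun x hx => hx.1.le)
    rw [setLIntegral_congr_fun measurableSet_Ioc key1, conv1, E1 ha.le, ha2]
  have p2 : ∫⁻ s in Ioi a, ENNReal.ofReal (s * Fi r s) = ENNReal.ofReal (r⁻¹/2) := by
    have key : ∀ s ∈ Ioi a, ENNReal.ofReal (s * Fi r s)
        = ENNReal.ofReal ((r^2)⁻¹ * (s^3)⁻¹) := by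
      intro s hs
      have has : a < s := hs
      have hs0 : 0 < s := lt_of_lt_of_le ha has.le
      have hs1 : 1 ≤ s := le_of_lt (lt_of_le_of_lt ha1 has)
      have hs2 : r⁻¹ ≤ s^2 := by nlinarith [ha2]
      have hrs2 : 1 ≤ r * s^2 := by
        calc (1:ℝ) = r * r⁻¹ := hrr.symm
        _ ≤ r * s^2 := by nlinarith
      rw [Fi_high hr hs1 (le_trans hr1 hs1) (by nlinarith)]
      congr 1
      field_simp
    have conv2 : ∫⁻ s in Ioi a, ENNReal.ofReal ((r^2)⁻¹ * (s^3)⁻¹)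
        = ENNReal.ofReal (∫ s in Ioi a, (r^2)⁻¹ * (s^3)⁻¹) :=
      lint_eq measurableSet_Ioi (E3int ha (by positivity))
        (fun x hx => mul_nonneg (by positivity)
          (inv_nonneg.2 (pow_nonneg (le_of_lt (lt_trans ha hx)) 3)))
    rw [setLIntegral_congr_fun measurableSet_Ioi key, conv2,
      E3 ha (by positivity), ha2]
    congr 1
    field_simp
  rw [p1, p2, ← ENNReal.ofReal_add (by positivity) (by positivity)]
  ring_nf

lemma split2 {a b : ℝ} (h : 0 ≤ a) (hab : a ≤ b) (f : ℝ → ℝ≥0∞) :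
    ∫⁻ s in Ioc (0:ℝ) b, f s = (∫⁻ s in Ioc (0:ℝ) a, f s) + ∫⁻ s in Ioc a b, f s := by
  rw [← Ioc_union_Ioc_eq_Ioc h hab,
    lintegral_union measurableSet_Ioc (Ioc_disjoint_Ioc_of_le le_rfl)]

lemma Gge {r : ℝ} (hr1 : 1 ≤ r) : G r = ENNReal.ofReal ((1 + 3*Real.log r) * (r^4)⁻¹) := by
  have hr : 0 < r := lt_of_lt_of_le one_pos hr1
  set b : ℝ := (r^2)⁻¹ with hbdef
  have hb : 0 < b := by positivity
  have hb1 : b ≤ 1 := by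
    rw [hbdef]
    have : (1:ℝ) ≤ r^2 := by nlinarith
    exact inv_le_one_of_one_le₀ this
  have hbr : b ≤ r := le_trans hb1 hr1
  have hbb : r^2 * b = 1 := mul_inv_cancel₀ (by positivity)
  have hlog : 0 ≤ Real.log r := Real.log_nonneg hr1
  rw [G, split1 hr, split2 hb.le hbr]
  have p1 : ∫⁻ s in Ioc (0:ℝ) b, ENNReal.ofReal (s * Fi r s)
      = ENNReal.ofReal (b^2/2) := by
    have key1 : ∀ s ∈ Ioc (0:ℝ) b, ENNReal.ofReal (s * Fi r s) = ENNReal.ofReal s := by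
      intro s hs
      have hs0 : 0 < s := hs.1
      have hsb : s ≤ b := hs.2
      have hs2 : s^2 ≤ b^2 := by nlinarith
      have e1 : r^2*s^2 ≤ r^2*b^2 := by nlinarith [sq_nonneg r]
      have e2 : r^2*b^2 = b := by
        calc r^2*b^2 = (r^2*b)*b := by ring
        _ = b := by rw [hbb]; ring
      have h1 : (r*s)^2 ≤ 1 := by nlinarith
      have h2 : r^2 * (r*s)^2 ≤ 1 := by nlinarith [mul_le_mul_of_nonneg_left (e1.trans_eq e2) (sq_nonneg r), hbb]
      have hs21 : s^2 ≤ 1 := by nlinarith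
      have hprod : (r^2*s^2)*s^2 ≤ b*1 := mul_le_mul (e1.trans_eq e2) hs21 (sq_nonneg s) hb.le
      have h3 : s^2 * (r*s)^2 ≤ 1 := by nlinarith [hprod, hb1]
      rw [Fi_low hr hs0 h1 h2 h3, mul_one]
    have conv1 : ∫⁻ s in Ioc (0:ℝ) b, ENNReal.ofReal s
        = ENNReal.ofReal (∫ s in Ioc (0:ℝ) b, s) :=
      lint_eq measurableSet_Ioc (by apply Continuous.integrableOn_Ioc; fun_prop)
        (fun x hx => hx.1.le)
    rw [setLIntegral_congr_fun measurableSet_Ioc key1, conv1, E1 hb.le]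
  have p2 : ∫⁻ s in Ioc b r, ENNReal.ofReal (s * Fi r s)
      = ENNReal.ofReal ((r^4)⁻¹ * (3 * Real.log r)) := by
    have key2 : ∀ s ∈ Ioc b r, ENNReal.ofReal (s * Fi r s)
        = ENNReal.ofReal ((r^4)⁻¹ * s⁻¹) := by
      intro s hs
      have hs0 : 0 < s := lt_of_lt_of_le hb hs.1.le
      have hbs : b ≤ s := hs.1.le
      have hge : 1 ≤ r^2 * (r*s)^2 := by
        have : r^2*b ≤ r^2*s := by nlinarith [sq_nonneg r]
        nlinarith [hbb, mul_le_mul_of_nonneg_left this (sq_nonneg r)]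
      rw [Fi_mid hr1 hs0 hs.2 hge]
      congr 1
      field_simp
    have conv2 : ∫⁻ s in Ioc b r, ENNReal.ofReal ((r^4)⁻¹ * s⁻¹)
        = ENNReal.ofReal (∫ s in Ioc b r, (r^4)⁻¹ * s⁻¹) := by
      refine lint_eq measurableSet_Ioc ?_ (fun x hx => mul_nonneg (by positivity)
        (inv_nonneg.2 (le_of_lt (lt_trans hb hx.1))))
      refine (ContinuousOn.integrableOn_Icc ?_).mono_set Ioc_subset_Icc_self
      exact ContinuousOn.mul continuousOn_const
        (ContinuousOn.inv₀ continuousOn_id fun x hx => ne_of_gt (lt_of_lt_of_le hb hx.1))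
    rw [setLIntegral_congr_fun measurableSet_Ioc key2, conv2, E2 hb hbr]
    congr 1
    rw [hbdef, Real.log_inv, Real.log_pow]
    push_cast
    ring
  have p3 : ∫⁻ s in Ioi r, ENNReal.ofReal (s * Fi r s)
      = ENNReal.ofReal ((r^2)⁻¹ * (2*r^2)⁻¹) := by
    have key3 : ∀ s ∈ Ioi r, ENNReal.ofReal (s * Fi r s)
        = ENNReal.ofReal ((r^2)⁻¹ * (s^3)⁻¹) := by
      intro s hs
      have hrs : r < s := hs
      have hs0 : 0 < s := lt_of_le_of_lt hr.le hrs
      have hs1 : 1 ≤ s := le_trans hr1 hrs.le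
      have hrsone : 1 ≤ r*s := by nlinarith
      have hA : 1 ≤ (r*s)^2 := by nlinarith
      have hB : 1 ≤ s^2 := by nlinarith
      have hge : 1 ≤ s^2 * (r*s)^2 := by nlinarith
      rw [Fi_high hr hs1 hrs.le hge]
      congr 1
      field_simp
    have conv3 : ∫⁻ s in Ioi r, ENNReal.ofReal ((r^2)⁻¹ * (s^3)⁻¹)
        = ENNReal.ofReal (∫ s in Ioi r, (r^2)⁻¹ * (s^3)⁻¹) :=
      lint_eq measurableSet_Ioi (E3int hr (by positivity))
        (fun x hx => mul_nonneg (by positivity)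
          (inv_nonneg.2 (pow_nonneg (le_of_lt (lt_trans hr hx)) 3)))
    rw [setLIntegral_congr_fun measurableSet_Ioi key3, conv3, E3 hr (by positivity)]
  rw [p1, p2, p3, ← ENNReal.ofReal_add (by positivity) (by positivity),
    ← ENNReal.ofReal_add (by positivity) (by positivity)]
  congr 1
  rw [hbdef]
  field_simp
  ring

lemma G_meas : Measurable G := by
  have : Measurable (fun p : ℝ × ℝ => ENNReal.ofReal (p.2 * Fi p.1 p.2)) :=
    (measurable_snd.mul Fi_meas).ennreal_ofReal
  exact Measurable.lintegral_prod_right this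

lemma outer : ∫⁻ r in Ioi (0:ℝ), ENNReal.ofReal r * G r = ENNReal.ofReal (9/4) := by
  rw [split1 one_pos]
  have p1 : ∫⁻ r in Ioc (0:ℝ) 1, ENNReal.ofReal r * G r = 1 := by
    have key : ∀ r ∈ Ioc (0:ℝ) 1, ENNReal.ofReal r * G r = 1 := by
      intro r hr
      rw [Gle hr.1 hr.2, ← ENNReal.ofReal_mul hr.1.le,
        mul_inv_cancel₀ (ne_of_gt hr.1), ENNReal.ofReal_one]
    rw [setLIntegral_congr_fun measurableSet_Ioc key, setLIntegral_one,
      Real.volume_Ioc]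
    norm_num
  have p2 : ∫⁻ r in Ioi (1:ℝ), ENNReal.ofReal r * G r = ENNReal.ofReal (5/4) := by
    have key : ∀ r ∈ Ioi (1:ℝ), ENNReal.ofReal r * G r
        = ENNReal.ofReal ((1 + 3*Real.log r) * (r^3)⁻¹) := by
      intro r hr
      have hr1 : 1 ≤ r := le_of_lt hr
      have hr0 : 0 < r := lt_of_lt_of_le one_pos hr1
      rw [Gge hr1, ← ENNReal.ofReal_mul hr0.le]
      congr 1
      field_simp
    have conv : ∫⁻ r in Ioi (1:ℝ), ENNReal.ofReal ((1 + 3*Real.log r) * (r^3)⁻¹)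
        = ENNReal.ofReal (∫ r in Ioi (1:ℝ), (1 + 3*Real.log r) * (r^3)⁻¹) :=
      lint_eq measurableSet_Ioi E5int
        (fun x hx => mul_nonneg
          (by nlinarith [Real.log_nonneg (le_of_lt hx)])
          (inv_nonneg.2 (pow_nonneg (by linarith [mem_Ioi.1 hx]) 3)))
    rw [setLIntegral_congr_fun measurableSet_Ioi key, conv, E5]
  rw [p1, p2, show (1:ℝ≥0∞) = ENNReal.ofReal 1 by simp,
    ← ENNReal.ofReal_add (by norm_num) (by norm_num)]
  norm_num

lemma habs : Measurable (fun z : ℂ => ‖z‖) := continuous_norm.measurable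

lemma inner_meas : Measurable fun y : ℂ × ℂ =>
    ENNReal.ofReal (Fi (‖y.1‖) (‖y.2‖)) :=
  (Fi_meas.comp ((habs.comp measurable_fst).prodMk (habs.comp measurable_snd))).ennreal_ofReal

lemma main_lintegral :
    ∫⁻ y : ℂ × ℂ, ENNReal.ofReal (Fi (‖y.1‖) (‖y.2‖))
      = ENNReal.ofReal (9 * Real.pi ^ 2) := by
  rw [MeasureTheory.Measure.volume_eq_prod, lintegral_prod _ inner_meas.aemeasurable]
  have inner : ∀ y1 : ℂ, ∫⁻ y2 : ℂ, ENNReal.ofReal (Fi (‖y1‖) (‖y2‖))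
      = ENNReal.ofReal (2 * Real.pi) * G (‖y1‖) := by
    intro y1
    rw [radial_lintegral (fun s => ENNReal.ofReal (Fi (‖y1‖) s))
      ((Fi_meas.comp (measurable_const.prodMk measurable_id)).ennreal_ofReal)]
    congr 1
    refine setLIntegral_congr_fun measurableSet_Ioi (fun s hs => ?_)
    rw [← ENNReal.ofReal_mul (le_of_lt hs)]
  simp only [inner]
  have hGm : Measurable fun z : ℂ => G (‖z‖) := G_meas.comp habs
  rw [lintegral_const_mul _ hGm,
    radial_lintegral G G_meas, outer,
    ← ENNReal.ofReal_mul (by positivity), ← ENNReal.ofReal_mul (by positivity)]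
  congr 1
  ring

/-- complex archimedian density: the integral over `(ℂ∖{0})²` of
`1/(max{1,|y₁|²,|y₂|²,|y₁y₂|⁻²}·|y₁y₂|²)` with respect to Lebesgue measure on `ℂ² ≅ ℝ⁴`
equals `9π²`. -/
theorem stmt12 :
    (∫ y in {y : ℂ × ℂ | y.1 ≠ 0 ∧ y.2 ≠ 0},
      (max (max 1 (‖y.1‖ ^ 2))
          (max (‖y.2‖ ^ 2) ((‖y.1 * y.2‖ ^ 2)⁻¹)) *
        ‖y.1 * y.2‖ ^ 2)⁻¹)
    = 9 * Real.pi ^ 2 := by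
  have hset : ({y : ℂ × ℂ | y.1 ≠ 0 ∧ y.2 ≠ 0} : Set (ℂ × ℂ)) =ᵐ[volume] univ := by
    rw [ae_eq_univ]
    have hsub : ({y : ℂ × ℂ | y.1 ≠ 0 ∧ y.2 ≠ 0} : Set (ℂ × ℂ))ᶜ ⊆
        (({0} : Set ℂ) ×ˢ (univ : Set ℂ)) ∪ ((univ : Set ℂ) ×ˢ ({0} : Set ℂ)) := by
      intro y hy
      simp only [mem_compl_iff, mem_setOf_eq, not_and_or, not_not] at hy
      rcases hy with h | h
      · exact Or.inl ⟨h, mem_univ _⟩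
      · exact Or.inr ⟨mem_univ _, h⟩
    refine measure_mono_null hsub (measure_union_null ?_ ?_)
    · rw [Measure.volume_eq_prod, Measure.prod_prod]; simp
    · rw [Measure.volume_eq_prod, Measure.prod_prod]; simp
  rw [setIntegral_congr_set hset, setIntegral_univ]
  have m1 : Measurable fun y : ℂ × ℂ => ‖y.1‖ := habs.comp measurable_fst
  have m2 : Measurable fun y : ℂ × ℂ => ‖y.2‖ := habs.comp measurable_snd
  have m12 : Measurable fun y : ℂ × ℂ => ‖y.1 * y.2‖ :=
    habs.comp (measurable_fst.mul measurable_snd)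
  have hmeas : Measurable fun y : ℂ × ℂ =>
      (max (max 1 (‖y.1‖ ^ 2))
          (max (‖y.2‖ ^ 2) ((‖y.1 * y.2‖ ^ 2)⁻¹)) *
        ‖y.1 * y.2‖ ^ 2)⁻¹ :=
    (((measurable_const.max (m1.pow_const 2)).max
      ((m2.pow_const 2).max ((m12.pow_const 2).inv))).mul (m12.pow_const 2)).inv
  have hnn : ∀ y : ℂ × ℂ, 0 ≤
      (max (max 1 (‖y.1‖ ^ 2))
          (max (‖y.2‖ ^ 2) ((‖y.1 * y.2‖ ^ 2)⁻¹)) *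
        ‖y.1 * y.2‖ ^ 2)⁻¹ := by
    intro y
    have h1 : (0:ℝ) ≤ max (max 1 (‖y.1‖ ^ 2))
        (max (‖y.2‖ ^ 2) ((‖y.1 * y.2‖ ^ 2)⁻¹)) :=
      le_trans zero_le_one (le_max_of_le_left (le_max_left _ _))
    exact inv_nonneg.2 (mul_nonneg h1 (by positivity))
  rw [integral_eq_lintegral_of_nonneg_ae (ae_of_all _ hnn) hmeas.aestronglyMeasurable]
  have hcongr : (fun y : ℂ × ℂ => ENNReal.ofReal
      ((max (max 1 (‖y.1‖ ^ 2))
          (max (‖y.2‖ ^ 2) ((‖y.1 * y.2‖ ^ 2)⁻¹)) *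
        ‖y.1 * y.2‖ ^ 2)⁻¹))
      = fun y : ℂ × ℂ => ENNReal.ofReal (Fi (‖y.1‖) (‖y.2‖)) := by
    funext y
    simp only [Fi, norm_mul]
  rw [hcongr, main_lintegral, ENNReal.toReal_ofReal (by positivity)]
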